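/- Let W ⊆ X be a locally closed subvariety of a k-variety X over a global field k, and suppose X satisfies very strong approximation for an obstruction datum (ω, S, k). Then W also satisfies very strong approximation for (ω, S, k). That is: if every adelic point of X surviving the obstruction ω is rational, then the same holds for W. -/

import Mathlib

open AlgebraicGeometry CategoryTheory

noncomputable section

variable (k : Type) [Field k]

/-- `Spec R` as a scheme over `Spec k`, for a `k`-algebra `R`; for `R` the ring of adeles
`𝔸_k` (resp. `𝔸_{k,S}`, resp. `k` itself) the set of morphisms `specOver k R ⟶ X` in the
category of schemes over `k` is the set of adelic points `X(𝔸_k)` (resp. `X(𝔸_{k,S})`,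
resp. the set of rational points `X(k)`). -/
def specOver (R : Type) [CommRing R] [Algebra k R] : Over (Spec (CommRingCat.of k)) :=
  Over.mk (Spec.map (CommRingCat.ofHom (algebraMap k R)))

/-- The morphism `specOver k S ⟶ specOver k R` induced by a `k`-algebra map `R →ₐ[k] S`
(e.g. the projection `𝔸_k → 𝔸_{k,S}`, or the inclusion `k → 𝔸_k`). -/
def resOver {R S : Type} [CommRing R] [Algebra k R] [CommRing S] [Algebra k S]
    (φ : R →ₐ[k] S) : specOver k S ⟶ specOver k R :=
  Over.homMk (Spec.map (CommRingCat.ofHom (φ : R →+* S)))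
    (by
      dsimp [specOver]
      rw [← Spec.map_comp]
      congr 1
      exact CommRingCat.hom_ext (RingHom.ext fun x => (φ.commutes x)))

/-- A generalized obstruction (to the local-global principle) over `k`, with adele ring `A`:
a subfunctor `X ↦ X(𝔸_k)^ω ⊆ X(𝔸_k)` of the adelic-points functor on `k`-varieties
containing the rational points `X(k)`. -/
structure GeneralizedObstruction (A : Type) [CommRing A] [Algebra k A] where
  obs : ∀ X : Over (Spec (CommRingCat.of k)), Set (specOver k A ⟶ X)
  functorial : ∀ {X Y : Over (Spec (CommRingCat.of k))} (f : X ⟶ Y)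
    {α : specOver k A ⟶ X}, α ∈ obs X → α ≫ f ∈ obs Y
  contains_rat : ∀ (X : Over (Spec (CommRingCat.of k))) (x : specOver k k ⟶ X),
    resOver k (Algebra.ofId k A) ≫ x ∈ obs X

variable {A AS : Type} [CommRing A] [Algebra k A] [CommRing AS] [Algebra k AS]

/-- The projected obstruction set `X(𝔸_{k,S})^ω`: the image of `X(𝔸_k)^ω` under the
projection `X(𝔸_k) → X(𝔸_{k,S})` induced by `π : 𝔸_k → 𝔸_{k,S}`. -/
def obsSet (ω : GeneralizedObstruction k A) (π : A →ₐ[k] AS)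
    (X : Over (Spec (CommRingCat.of k))) : Set (specOver k AS ⟶ X) :=
  (fun α => resOver k π ≫ α) '' ω.obs X

/-- Very strong approximation (VSA) for the obstruction datum `(ω, S, k)`:
`X(k) = X(𝔸_{k,S})^ω` (where `X(k) ⊆ X(𝔸_{k,S})` diagonally). -/
def IsVSA (ω : GeneralizedObstruction k A) (π : A →ₐ[k] AS)
    (X : Over (Spec (CommRingCat.of k))) : Prop :=
  obsSet k ω π X =
    Set.range fun x : specOver k k ⟶ X => resOver k (Algebra.ofId k AS) ≫ x


-- auxiliary: residue field map of a preimmersion is an iso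
lemma aux_isIso_residueFieldMap {X Y : Scheme} (f : X ⟶ Y) [IsPreimmersion f] (x : X) :
    IsIso (f.residueFieldMap x) := by
  have hinj : Function.Injective ⇑(f.residueFieldMap x) := RingHom.injective _
  have h := Scheme.residue_residueFieldMap f x
  have h1 : Function.Surjective ⇑(f.stalkMap x ≫ X.residue x) := by
    intro y
    obtain ⟨z, hz⟩ := X.residue_surjective x y
    obtain ⟨u, hu⟩ := f.stalkMap_surjective x z
    exact ⟨u, by simp [hu, hz]⟩
  rw [← h] at h1
  have hsurj : Function.Surjective ⇑(f.residueFieldMap x) := by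
    intro y
    obtain ⟨z, hz⟩ := h1 y
    exact ⟨(Y.residue (f.base x)) z, by simpa using hz⟩
  rw [ConcreteCategory.isIso_iff_bijective]
  exact ⟨hinj, hsurj⟩

-- auxiliary: lifting a field-valued point through a preimmersion, given a factorization
-- after a field extension
lemma aux_lift {k F : Type} [Field k] [Field F] {X W : Scheme} (f : W ⟶ X) [IsPreimmersion f]
    (g : Spec (CommRingCat.of k) ⟶ X) (φ : Spec (CommRingCat.of F) ⟶ Spec (CommRingCat.of k))
    (h : Spec (CommRingCat.of F) ⟶ W) (hh : h ≫ f = φ ≫ g) :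
    ∃ y : Spec (CommRingCat.of k) ⟶ W, y ≫ f = g := by
  classical
  set w : W := h.base (IsLocalRing.closedPoint F) with hw
  have e : f.base w = g.base (IsLocalRing.closedPoint k) := by
    have : (h ≫ f).base (IsLocalRing.closedPoint F) = (φ ≫ g).base (IsLocalRing.closedPoint F) := by
      rw [hh]
    simp only [Scheme.Hom.comp_apply, TopCat.coe_comp, Function.comp_apply] at this
    refine this.trans ?_
    show g.base (φ.base _) = _
    congr 1
    exact Subsingleton.elim _ _
  haveI := aux_isIso_residueFieldMap f w
  let χ : X.residueField (g.base (IsLocalRing.closedPoint k)) ⟶ CommRingCat.of k :=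
    X.descResidueField (Scheme.stalkClosedPointTo g)
  let ψ : W.residueField w ⟶ CommRingCat.of k :=
    inv (f.residueFieldMap w) ≫ (X.residueFieldCongr e).hom ≫ χ
  refine ⟨Spec.map ψ ≫ W.fromSpecResidueField w, ?_⟩
  rw [Category.assoc, ← Scheme.Hom.SpecMap_residueFieldMap_fromSpecResidueField,
    ← Category.assoc, ← Spec.map_comp]
  have hcomp : f.residueFieldMap w ≫ ψ = (X.residueFieldCongr e).hom ≫ χ := by
    simp [ψ]
  rw [hcomp, Spec.map_comp, Category.assoc,
    Scheme.residueFieldCongr_fromSpecResidueField]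
  exact Scheme.descResidueField_stalkClosedPointTo_fromSpecResidueField k X g

lemma resOver_comp (k : Type) [Field k] {R S T : Type} [CommRing R] [Algebra k R]
    [CommRing S] [Algebra k S] [CommRing T] [Algebra k T]
    (φ : R →ₐ[k] S) (ψ : S →ₐ[k] T) :
    resOver k ψ ≫ resOver k φ = resOver k (ψ.comp φ) := by
  apply Over.OverMorphism.ext
  simp only [Over.comp_left, resOver, Over.homMk_left]
  erw [← Spec.map_comp]
  rfl

/-- Let `W ⊆ X` be a locally closed subvariety (an immersion `f : W ⟶ X`)
of a `k`-variety `X` over a global field `k`, and suppose `X` satisfies very strong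
approximation for an obstruction datum `(ω, S, k)`.  Then `W` also satisfies very strong
approximation for `(ω, S, k)`: if every adelic point of `X` surviving the obstruction `ω` is
rational, the same holds for `W`.  (Since `S` is nonempty, the ring `𝔸_{k,S}` comes with a
projection to the completion `k_v` at some place `v ∈ S`; this is the datum `ev : AS →ₐ[k] F`
with `F` a field extension of `k`.) -/
theorem stmt11 (ω : GeneralizedObstruction k A) (π : A →ₐ[k] AS)
    (F : Type) [Field F] [Algebra k F] (ev : AS →ₐ[k] F)
    (X W : Over (Spec (CommRingCat.of k))) (f : W ⟶ X) [IsImmersion f.left]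
    (hX : IsVSA k ω π X) :
    IsVSA k ω π W := by
  have hπ : π.comp (Algebra.ofId k A) = Algebra.ofId k AS :=
    AlgHom.ext fun a => by simp [Algebra.ofId_apply]
  have hev : ev.comp (Algebra.ofId k AS) = Algebra.ofId k F :=
    AlgHom.ext fun a => by simp [Algebra.ofId_apply]
  have hmono : Mono f := by
    have h1 : Mono f.left := inferInstance
    exact (Over.forget _).mono_of_mono_map h1
  unfold IsVSA at hX ⊢
  apply Set.Subset.antisymm
  · rintro α ⟨β, hβ, rfl⟩
    have hX' : resOver k π ≫ (β ≫ f) ∈ obsSet k ω π X := ⟨β ≫ f, ω.functorial f hβ, rfl⟩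
    rw [hX] at hX'
    obtain ⟨x, hx⟩ := hX'
    have hh : (resOver k ev ≫ resOver k π ≫ β).left ≫ f.left =
        (resOver k (Algebra.ofId k F)).left ≫ x.left := by
      have : resOver k ev ≫ resOver k π ≫ β ≫ f =
          resOver k (Algebra.ofId k F) ≫ x := by
        rw [← hev, ← resOver_comp, Category.assoc]
        congr 1
        exact hx.symm
      calc (resOver k ev ≫ resOver k π ≫ β).left ≫ f.left
          = (resOver k ev ≫ resOver k π ≫ β ≫ f).left := by
            simp only [Over.comp_left, Category.assoc]
        _ = (resOver k (Algebra.ofId k F) ≫ x).left := by rw [this]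
        _ = (resOver k (Algebra.ofId k F)).left ≫ x.left := by
            simp only [Over.comp_left]
    obtain ⟨y0, hy0⟩ := aux_lift f.left x.left (resOver k (Algebra.ofId k F)).left
      (resOver k ev ≫ resOver k π ≫ β).left hh
    have hy0w : y0 ≫ W.hom = (specOver k k).hom := by
      rw [← Over.w f, ← Category.assoc, hy0]
      exact Over.w x
    refine ⟨Over.homMk y0 hy0w, ?_⟩
    show resOver k (Algebra.ofId k AS) ≫ Over.homMk y0 hy0w = resOver k π ≫ β
    rw [← cancel_mono f, Category.assoc]
    have hyf : Over.homMk y0 hy0w ≫ f = x := by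
      apply Over.OverMorphism.ext
      exact hy0
    rw [hyf]
    exact hx
  · rintro α ⟨x, rfl⟩
    refine ⟨resOver k (Algebra.ofId k A) ≫ x, ω.contains_rat W x, ?_⟩
    show resOver k π ≫ resOver k (Algebra.ofId k A) ≫ x = resOver k (Algebra.ofId k AS) ≫ x
    rw [← Category.assoc, resOver_comp, hπ]
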